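/- Let p be a prime, A a commutative ring with no p-torsion, and suppose (x_0, x_1, x_2, ...) ∈ X(A) ⊆ A^ℕ has x_0 = 0. Then (x_0, x_1, ...) ∈ V(X(A)); in particular every element of X(A) with first coordinate zero is divisible by p coordinatewise after a shift: there is y ∈ X(A) with p·(0, y_0, y_1, ...) = (x_0, x_1, ...). -/

import Mathlib

/-- The Teichmüller sequence `⟨r⟩ = (r, r^p, r^{p^2}, ...)` in `R^ℕ`. -/
def teich (p : ℕ) {R : Type*} [CommRing R] (r : R) : ℕ → R := fun k => r ^ p ^ k

/-- The Verschiebung `V(r_0, r_1, ...) = p • (0, r_0, r_1, ...)` on `R^ℕ`. -/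
def Vmap (p : ℕ) {R : Type*} [CommRing R] : (ℕ → R) → (ℕ → R) :=
  fun r k => match k with
  | 0 => 0
  | m + 1 => (p : R) * r m

/-- `X(R)`: the closed subgroup of `R^ℕ` (product topology, `R` discrete)
generated by the elements `V^n⟨r⟩`. -/
def XR (p : ℕ) (R : Type*) [CommRing R] : AddSubgroup (ℕ → R) :=
  letI : TopologicalSpace R := ⊥
  haveI : DiscreteTopology R := ⟨rfl⟩
  (AddSubgroup.closure {x : ℕ → R | ∃ n r, x = (Vmap p)^[n] (teich p r)}).topologicalClosure

open WittVector

section Topology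

variable {A : Type*}

/-- Membership in a closure, for the product of discrete topologies on `ℕ → A`. -/
lemma pi_mem_closure_iff (s : Set (ℕ → A)) (x : ℕ → A) :
    letI : TopologicalSpace A := ⊥
    (x ∈ closure s ↔ ∀ N : ℕ, ∃ z ∈ s, ∀ k ≤ N, z k = x k) := by
  letI : TopologicalSpace A := ⊥
  haveI : DiscreteTopology A := ⟨rfl⟩
  show x ∈ closure s ↔ _
  rw [mem_closure_iff_nhds]
  constructor
  · intro h N
    have hU : (Set.Iic N).pi (fun i => ({x i} : Set A)) ∈ nhds x := by
      apply set_pi_mem_nhds (Set.finite_Iic N)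
      intro i _
      exact (isOpen_discrete ({x i} : Set A)).mem_nhds (by simp)
    obtain ⟨z, hz1, hz2⟩ := h _ hU
    exact ⟨z, hz2, fun k hk => hz1 k hk⟩
  · intro h t ht
    rw [nhds_pi, Filter.mem_pi] at ht
    obtain ⟨I, hIf, tset, htset, hsub⟩ := ht
    obtain ⟨N, hN⟩ := hIf.bddAbove
    obtain ⟨z, hzs, hz⟩ := h N
    refine ⟨z, hsub ?_, hzs⟩
    intro i hi
    rw [hz i (hN hi)]
    have := htset i
    rw [nhds_discrete] at this
    exact this

end Topology

section Witt

variable (p : ℕ) [Fact p.Prime] {A : Type*} [CommRing A]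

local notation "𝕎" => WittVector p

/-- The generating set of `XR`. -/
def genS (A : Type*) [CommRing A] : Set (ℕ → A) :=
  {x : ℕ → A | ∃ n r, x = (Vmap p)^[n] (teich p r)}

lemma gh_teich (r : A) : ghostMap (teichmuller p r) = teich p r := by
  funext n
  rw [ghostMap_apply, ghostComponent_teichmuller]
  rfl

lemma gh_versch (w : 𝕎 A) :
    ghostMap (verschiebung w) = Vmap p (ghostMap w) := by
  funext k
  cases k with
  | zero =>
    rw [ghostMap_apply, ghostComponent_zero_verschiebung]
    rfl
  | succ n =>
    rw [ghostMap_apply, ghostComponent_verschiebung]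
    show _ = (p : A) * ghostMap w n
    rw [ghostMap_apply]

lemma gh_versch_iter (n : ℕ) (w : 𝕎 A) :
    ghostMap (verschiebung^[n] w) = (Vmap p)^[n] (ghostMap w) := by
  induction n with
  | zero => rfl
  | succ n ih =>
    rw [Function.iterate_succ_apply', Function.iterate_succ_apply', gh_versch, ih]

omit [Fact p.Prime] in
lemma Vmap_iter_eq_zero : ∀ (n k : ℕ), k < n → ∀ z : ℕ → A, (Vmap p)^[n] z k = 0 := by
  intro n
  induction n with
  | zero => intro k hk; omega
  | succ n ih =>
    intro k hk z
    rw [Function.iterate_succ_apply']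
    cases k with
    | zero => rfl
    | succ m =>
      show (p : A) * (Vmap p)^[n] z m = 0
      rw [ih m (by omega) z, mul_zero]

lemma gh_zero_coeff (w : 𝕎 A) : ghostMap w 0 = w.coeff 0 := by
  rw [ghostMap_apply, ghostComponent_apply, wittPolynomial_zero]
  simp

lemma exists_versch (w : 𝕎 A) (h : w.coeff 0 = 0) : ∃ u : 𝕎 A, verschiebung u = w := by
  refine ⟨WittVector.mk p (fun n => w.coeff (n + 1)), ?_⟩
  ext n
  cases n with
  | zero => rw [verschiebung_coeff_zero, h]
  | succ m => rw [verschiebung_coeff_succ]; rfl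

/-- The key approximation: every Witt vector is, modulo `V^N`, a sum of
`V^n`-Teichmüller elements (at the level of ghost sequences). -/
lemma approx (N : ℕ) (w : 𝕎 A) :
    ∃ u : 𝕎 A, ghostMap (w - verschiebung^[N] u) ∈ AddSubgroup.closure (genS p A) := by
  induction N generalizing w with
  | zero =>
    refine ⟨w, ?_⟩
    simp only [Function.iterate_zero, id_eq, sub_self, map_zero]
    exact AddSubgroup.zero_mem _
  | succ N ih =>
    obtain ⟨u, hu⟩ := ih w
    set c := u.coeff 0 with hc
    have h0 : (u - teichmuller p c).coeff 0 = 0 := by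
      have : ghostMap (u - teichmuller p c) 0 = 0 := by
        rw [map_sub]
        have h1 := gh_zero_coeff p u
        have h2 := gh_zero_coeff p (teichmuller p c)
        simp only [Pi.sub_apply, h1, h2, teichmuller_coeff_zero, sub_self]
        exact sub_self _
      rwa [gh_zero_coeff] at this
    obtain ⟨u', hu'⟩ := exists_versch p _ h0
    refine ⟨u', ?_⟩
    have hdecomp : w - verschiebung^[N + 1] u'
        = (w - verschiebung^[N] u) + verschiebung^[N] (teichmuller p c) := by
      have h3 : u = teichmuller p c + verschiebung u' := by
        rw [hu']; ring
      have h4 : verschiebung^[N] u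
          = verschiebung^[N] (teichmuller p c) + verschiebung^[N + 1] u' := by
        rw [h3, iterate_map_add, Function.iterate_succ_apply]
      rw [h4]; ring
    rw [hdecomp, map_add]
    refine AddSubgroup.add_mem _ hu ?_
    apply AddSubgroup.subset_closure
    refine ⟨N, c, ?_⟩
    rw [gh_versch_iter, gh_teich]

lemma ghost_mem_XR (w : 𝕎 A) : ghostMap w ∈ XR p A := by
  letI : TopologicalSpace A := ⊥
  haveI : DiscreteTopology A := ⟨rfl⟩
  show ghostMap w ∈ closure ((AddSubgroup.closure (genS p A) : AddSubgroup (ℕ → A)) : Set (ℕ → A))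
  rw [pi_mem_closure_iff]
  intro N
  obtain ⟨u, hu⟩ := approx p (N + 1) w
  refine ⟨ghostMap (w - verschiebung^[N + 1] u), hu, ?_⟩
  intro k hk
  rw [map_sub]
  have : ghostMap (verschiebung^[N + 1] u) k = 0 := by
    rw [gh_versch_iter]
    exact Vmap_iter_eq_zero p (N + 1) k (by omega) _
  rw [Pi.sub_apply, this, sub_zero]

lemma closure_le_ghost_range :
    AddSubgroup.closure (genS p A)
      ≤ AddMonoidHom.range ((ghostMap : 𝕎 A →+* (ℕ → A)) : 𝕎 A →+ (ℕ → A)) := by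
  apply (AddSubgroup.closure_le _).2
  rintro z ⟨n, r, rfl⟩
  exact ⟨verschiebung^[n] (teichmuller p r), by rw [← gh_teich p r, ← gh_versch_iter]; rfl⟩

end Witt

theorem stmt_19 (p : ℕ) (hp : p.Prime) (A : Type*) [CommRing A]
    (htf : ∀ a : A, p • a = 0 → a = 0)
    (x : ℕ → A) (hx : x ∈ XR p A) (h0 : x 0 = 0) :
    ∃ y ∈ XR p A, Vmap p y = x := by
  haveI := Fact.mk hp
  letI : TopologicalSpace A := ⊥
  haveI : DiscreteTopology A := ⟨rfl⟩
  have hx' : x ∈ closure ((AddSubgroup.closure (genS p A) : AddSubgroup (ℕ → A)) : Set (ℕ → A)) :=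
    hx
  rw [pi_mem_closure_iff] at hx'
  -- for each N, find a Witt vector u with V (ghost u) agreeing with x up to N
  have key : ∀ N : ℕ, ∃ u : WittVector p A, ∀ k ≤ N, Vmap p (ghostMap u) k = x k := by
    intro N
    obtain ⟨z, hz, hagree⟩ := hx' N
    obtain ⟨w, rfl⟩ := closure_le_ghost_range p hz
    have hw0 : w.coeff 0 = 0 := by
      have h : ghostMap w 0 = x 0 := hagree 0 (Nat.zero_le N)
      rw [gh_zero_coeff] at h
      rw [h, h0]
    obtain ⟨u, hu⟩ := exists_versch p w hw0
    refine ⟨u, fun k hk => ?_⟩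
    rw [← gh_versch, hu]
    exact hagree k hk
  choose u hu using key
  set y : ℕ → A := fun k => ghostMap (u (k + 1)) k with hy
  have hpy : ∀ k, (p : A) * y k = x (k + 1) := by
    intro k
    exact hu (k + 1) (k + 1) le_rfl
  have hsmul : ∀ a : A, p • a = (p : A) * a := fun a => by
    rw [nsmul_eq_mul]
  have hyX : y ∈ XR p A := by
    have hcl : IsClosed ((XR p A : AddSubgroup (ℕ → A)) : Set (ℕ → A)) :=
      AddSubgroup.isClosed_topologicalClosure _
    have : y ∈ closure ((XR p A : AddSubgroup (ℕ → A)) : Set (ℕ → A)) := by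
      rw [pi_mem_closure_iff]
      intro N
      refine ⟨ghostMap (u (N + 1)), ghost_mem_XR p _, ?_⟩
      intro k hk
      have h1 : (p : A) * ghostMap (u (N + 1)) k = x (k + 1) :=
        hu (N + 1) (k + 1) (by omega)
      have h2 : (p : A) * y k = x (k + 1) := hpy k
      have h3 : p • (ghostMap (u (N + 1)) k - y k) = 0 := by
        rw [hsmul, mul_sub, h1, h2, sub_self]
      exact sub_eq_zero.mp (htf _ h3)
    rwa [hcl.closure_eq] at this
  refine ⟨y, hyX, ?_⟩
  funext k
  cases k with
  | zero => exact h0.symm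
  | succ m => exact hpy m
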